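/- Let A be a symmetric n×n matrix, B an n×n matrix, d an n-vector, and define φ(A) = B'(d − A·1) + LowerTri(AB)'·1. If Ã = A ± (J^{ab} + J^{ba}) for distinct indices a ≠ b (where J^{ab} has a single 1 in entry (a,b)), then for every j, (φ(Ã) − φ(A))_j = ∓(B_{bj}·1{a<j} + B_{aj}·1{b<j}). -/

import Mathlib

open Matrix Finset

def lowerTri {n : ℕ} (M : Matrix (Fin n) (Fin n) ℝ) : Matrix (Fin n) (Fin n) ℝ :=
  fun i j => if j ≤ i then M i j else 0

/-- φ(A) = B'(d − A·1) + LowerTri(AB)'·1 -/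
def phi {n : ℕ} (B : Matrix (Fin n) (Fin n) ℝ) (d : Fin n → ℝ)
    (A : Matrix (Fin n) (Fin n) ℝ) : Fin n → ℝ :=
  Bᵀ.mulVec (d - A.mulVec 1) + (lowerTri (A * B))ᵀ.mulVec 1

theorem stmt_2 {n : ℕ} (A B : Matrix (Fin n) (Fin n) ℝ) (hA : A.IsSymm)
    (d : Fin n → ℝ) (a b : Fin n) (hab : a ≠ b) (ε : ℝ) (hε : ε = 1 ∨ ε = -1)
    (At : Matrix (Fin n) (Fin n) ℝ)
    (hAt : At = A + ε • (Matrix.single a b (1 : ℝ) + Matrix.single b a 1)) :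
    ∀ j : Fin n,
      (phi B d At - phi B d A) j
        = -ε * ((if a < j then B b j else 0) + (if b < j then B a j else 0)) := by
  intro j
  set E : Matrix (Fin n) (Fin n) ℝ :=
    ε • (Matrix.single a b (1 : ℝ) + Matrix.single b a 1) with hE
  have hS : ∀ (p q i k : Fin n), (Matrix.single p q (1:ℝ) * B) i k
      = if i = p then B q k else 0 := by
    intro p q i k
    by_cases h : i = p
    · subst h; simp
    · simp [h]
  have hEB : ∀ i k, (E * B) i k
      = ε * ((if i = a then B b k else 0) + (if i = b then B a k else 0)) := by
    intro i k
    rw [hE, Matrix.smul_mul, Matrix.add_mul]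
    simp [hS, Matrix.add_apply]
  -- first part
  have h1 : Bᵀ.mulVec (d - At.mulVec 1) j
      = Bᵀ.mulVec (d - A.mulVec 1) j - ε * (B a j + B b j) := by
    rw [hAt]
    rw [Matrix.add_mulVec, sub_add_eq_sub_sub, Matrix.mulVec_sub]
    have : Bᵀ.mulVec (E.mulVec 1) j = ε * (B a j + B b j) := by
      rw [hE, Matrix.smul_mulVec, Matrix.add_mulVec,
        Matrix.single_mulVec, Matrix.single_mulVec]
      simp [mulVec, dotProduct, Function.update_apply, Finset.sum_ite_eq',
        mul_ite, mul_zero, mul_one, mul_add, Finset.sum_add_distrib]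
      ring
    simp only [Pi.sub_apply, this]
  -- second part
  have h2 : (lowerTri (At * B))ᵀ.mulVec 1 j
      = (lowerTri (A * B))ᵀ.mulVec 1 j
        + ε * ((if j ≤ a then B b j else 0) + (if j ≤ b then B a j else 0)) := by
    rw [hAt, Matrix.add_mul]
    have hadd : lowerTri (A * B + E * B) = lowerTri (A * B) + lowerTri (E * B) := by
      ext i k
      simp only [lowerTri, Matrix.add_apply]
      split <;> simp
    rw [hadd, Matrix.transpose_add, Matrix.add_mulVec]
    have : (lowerTri (E * B))ᵀ.mulVec 1 j
        = ε * ((if j ≤ a then B b j else 0) + (if j ≤ b then B a j else 0)) := by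
      simp only [mulVec, dotProduct, Matrix.transpose_apply, Pi.one_apply, mul_one, lowerTri]
      have key : ∀ i : Fin n,
          (if j ≤ i then (E * B) i j else 0)
          = (if i = a then (if j ≤ a then ε * B b j else 0) else 0)
            + (if i = b then (if j ≤ b then ε * B a j else 0) else 0) := by
        intro i
        rw [hEB]
        by_cases hia : i = a <;> by_cases hib : i = b
        · exact absurd (hia.symm.trans hib) hab
        · subst hia; simp only [if_pos rfl, if_neg hib, if_neg (Ne.symm hib)]
          split_ifs <;> ring
        · subst hib; simp only [if_pos rfl, if_neg hia]
          split_ifs <;> ring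
        · simp [hia, hib]
      calc (∑ i, if j ≤ i then (E * B) i j else 0)
          = ∑ i, ((if i = a then (if j ≤ a then ε * B b j else 0) else 0)
            + (if i = b then (if j ≤ b then ε * B a j else 0) else 0)) :=
            Finset.sum_congr rfl fun i _ => key i
        _ = ε * ((if j ≤ a then B b j else 0) + (if j ≤ b then B a j else 0)) := by
            rw [Finset.sum_add_distrib, Finset.sum_ite_eq', Finset.sum_ite_eq']
            simp; split_ifs <;> ring
    simp only [Pi.add_apply, this]
  simp only [phi, Pi.sub_apply, Pi.add_apply, h1, h2]
  have e1 : (if a < j then B b j else 0) = B b j - (if j ≤ a then B b j else 0) := by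
    rcases le_or_gt j a with h | h
    · rw [if_pos h, if_neg (not_lt.mpr h)]; ring
    · rw [if_pos h, if_neg (not_le.mpr h)]; ring
  have e2 : (if b < j then B a j else 0) = B a j - (if j ≤ b then B a j else 0) := by
    rcases le_or_gt j b with h | h
    · rw [if_pos h, if_neg (not_lt.mpr h)]; ring
    · rw [if_pos h, if_neg (not_le.mpr h)]; ring
  rw [e1, e2]; ring
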